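/- Let τ ∈ (0, 1) and set λ := 4τ²/(1 − τ²) > 0. Define M : (0, ∞) → ℝ by M(z) := (√(1 + 4/z) − 1)/2, and let M′(z) denote its derivative at z. Then: (i) z² · (−M′(z)) = (1 + 4/z)^{−1/2} for every z > 0; (ii) λ² · (−M′(λ)) = τ; and (iii) M(λ) − λ · (−M′(λ)) = 1/(4τ) + τ/4 − 1/2. -/

import Mathlib

lemma aux_hasDeriv (z : ℝ) (hz : 0 < z) :
    HasDerivAt (fun z => (Real.sqrt (1 + 4 / z) - 1) / 2)
      (-(1 / (z ^ 2 * Real.sqrt (1 + 4 / z)))) z := by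
  have hs : 0 < 1 + 4 / z := by positivity
  have h1 : HasDerivAt (fun z : ℝ => 1 + 4 / z) (4 * -(z ^ 2)⁻¹) z := by
    simpa [div_eq_mul_inv] using ((hasDerivAt_inv hz.ne').const_mul 4).const_add 1
  have h2 := ((Real.hasDerivAt_sqrt hs.ne').comp z h1).sub_const 1
  have h3 := h2.div_const 2
  refine h3.congr_deriv ?_
  have hsq : Real.sqrt (1 + 4 / z) > 0 := Real.sqrt_pos.mpr hs
  field_simp
  ring

theorem stmt18 (τ : ℝ) (hτ0 : 0 < τ) (hτ1 : τ < 1)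
    (lam : ℝ) (hlam : lam = 4 * τ ^ 2 / (1 - τ ^ 2))
    (M : ℝ → ℝ) (hM : ∀ z, M z = (Real.sqrt (1 + 4 / z) - 1) / 2) :
    (∀ z : ℝ, 0 < z → z ^ 2 * (-(deriv M z)) = 1 / Real.sqrt (1 + 4 / z)) ∧
    lam ^ 2 * (-(deriv M lam)) = τ ∧
    M lam - lam * (-(deriv M lam)) = 1 / (4 * τ) + τ / 4 - 1 / 2 := by
  have hMfun : M = fun z => (Real.sqrt (1 + 4 / z) - 1) / 2 := funext hM
  have hd : ∀ z : ℝ, 0 < z → deriv M z = -(1 / (z ^ 2 * Real.sqrt (1 + 4 / z))) := by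
    intro z hz
    rw [hMfun]
    exact (aux_hasDeriv z hz).deriv
  have hτsq : 0 < 1 - τ ^ 2 := by nlinarith
  have hlampos : 0 < lam := by rw [hlam]; positivity
  have hkey : 1 + 4 / lam = 1 / τ ^ 2 := by
    rw [hlam]; field_simp; ring
  have hsqrt : Real.sqrt (1 + 4 / lam) = 1 / τ := by
    rw [hkey, one_div, Real.sqrt_inv, Real.sqrt_sq hτ0.le, one_div]
  refine ⟨fun z hz => ?_, ?_, ?_⟩
  · have hs : (0:ℝ) < Real.sqrt (1 + 4 / z) := Real.sqrt_pos.mpr (by positivity)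
    rw [hd z hz, neg_neg, one_div, mul_inv, ← mul_assoc,
      mul_inv_cancel₀ (pow_ne_zero 2 hz.ne'), one_mul, one_div]
  · rw [hd lam hlampos, hsqrt, hlam]
    field_simp
  · rw [hd lam hlampos, hsqrt, hM, hsqrt, hlam]
    field_simp
    ring
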